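/- For λ > 0 and μ_p ∈ (0,1), the expression (e^{1/λ}/(e^{2/λ}−1))·(e^{1/λ} − 2√(μ_p(1−μ_p))) − μ_p equals (e^{1/λ}·√(1−μ_p) − √μ_p)² / (e^{2/λ}−1); consequently it is zero if and only if √μ_p/√(1−μ_p) = e^{1/λ}, and is nonnegative for all μ_p ∈ (0,1). -/

import Mathlib

theorem stmt_3 (lam μp : ℝ) (hlam : 0 < lam) (h1 : 0 < μp) (h2 : μp < 1) :
    (Real.exp (1/lam) / (Real.exp (2/lam) - 1)) *
      (Real.exp (1/lam) - 2 * Real.sqrt (μp * (1 - μp))) - μp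
      = (Real.exp (1/lam) * Real.sqrt (1 - μp) - Real.sqrt μp)^2 / (Real.exp (2/lam) - 1)
    ∧
    ((Real.exp (1/lam) / (Real.exp (2/lam) - 1)) *
      (Real.exp (1/lam) - 2 * Real.sqrt (μp * (1 - μp))) - μp = 0
      ↔ Real.sqrt μp / Real.sqrt (1 - μp) = Real.exp (1/lam))
    ∧
    0 ≤ (Real.exp (1/lam) / (Real.exp (2/lam) - 1)) *
      (Real.exp (1/lam) - 2 * Real.sqrt (μp * (1 - μp))) - μp := by
  set a := Real.sqrt μp with ha
  set b := Real.sqrt (1 - μp) with hb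
  set E := Real.exp (1/lam) with hE
  have ha2 : a^2 = μp := Real.sq_sqrt h1.le
  have hb2 : b^2 = 1 - μp := Real.sq_sqrt (by linarith)
  have ha0 : 0 < a := Real.sqrt_pos.mpr h1
  have hb0 : 0 < b := Real.sqrt_pos.mpr (by linarith)
  have hE1 : 1 < E := by
    rw [hE]
    have : 0 < 1/lam := by positivity
    calc (1:ℝ) = Real.exp 0 := (Real.exp_zero).symm
    _ < Real.exp (1/lam) := Real.exp_lt_exp.mpr this
  have hexp2 : Real.exp (2/lam) = E^2 := by
    have h2l : 2/lam = 1/lam + 1/lam := by ring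
    rw [hE, h2l, Real.exp_add]; ring
  have hs : Real.sqrt (μp * (1 - μp)) = a * b := Real.sqrt_mul h1.le _
  have hd : 0 < E^2 - 1 := by nlinarith
  rw [hexp2, hs]
  have key : E / (E^2 - 1) * (E - 2 * (a * b)) - μp = (E * b - a)^2 / (E^2 - 1) := by
    field_simp
    nlinarith [ha2, hb2]
  refine ⟨key, ?_, ?_⟩
  · rw [key]
    constructor
    · intro h
      have h0 : E * b - a = 0 := by
        field_simp at h
        rw [mul_zero] at h; exact (pow_eq_zero_iff two_ne_zero).mp h
      field_simp
      linarith
    · intro h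
      have hab : a = E * b := by
        field_simp at h
        linarith
      rw [hab]
      simp
  · rw [key]
    positivity
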